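/- If λ^κ = λ for infinite cardinals κ ≤ λ, then the cofinality of the partial order of all functions from λ to κ ordered by everywhere domination (f ≤ g iff f(α) ≤ g(α) for every α < λ) equals 2^λ. -/

import Mathlib

open Cardinal Order

/-- The cofinality of the everywhere (pointwise) domination order on functions `X → K`. -/
noncomputable def everyCof (X K : Type*) [LE K] : Cardinal :=
  sInf {c | ∃ D : Set (X → K), #D = c ∧ ∀ f : X → K, ∃ g ∈ D, ∀ x, f x ≤ g x}

/-- The cofinality of the eventual domination order on functions `X → K`. -/
noncomputable def evenCof (X K : Type*) [LE X] [LE K] : Cardinal :=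
  sInf {c | ∃ D : Set (X → K), #D = c ∧
    ∀ f : X → K, ∃ g ∈ D, ∃ a : X, ∀ b : X, a ≤ b → f b ≤ g b}

namespace EveryCofAux

noncomputable section

open scoped Classical

universe u

variable {L K : Type u} [LinearOrder K] [WellFoundedLT K] [Nonempty K] [Nonempty L]

/-- least point of difference of `X ∘ c.1` and `c.2` (junk if they agree everywhere). -/
def ld (X : L → Bool) (c : (K → L) × (K → Bool)) : K :=
  if h : ∃ δ : K, X (c.1 δ) ≠ c.2 δ then
    (wellFounded_lt (α := K)).min {δ : K | X (c.1 δ) ≠ c.2 δ} h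
  else Classical.arbitrary K

theorem ld_eq (X : L → Bool) (c : (K → L) × (K → Bool)) (δ : K)
    (hδ : X (c.1 δ) ≠ c.2 δ) (hmin : ∀ l < δ, X (c.1 l) = c.2 l) : ld X c = δ := by
  have h : ∃ δ : K, X (c.1 δ) ≠ c.2 δ := ⟨δ, hδ⟩
  rw [ld, dif_pos h]
  have hmem : (wellFounded_lt (α := K)).min {δ : K | X (c.1 δ) ≠ c.2 δ} h ∈
      {δ : K | X (c.1 δ) ≠ c.2 δ} := (wellFounded_lt (α := K)).min_mem _ h
  rcases lt_trichotomy ((wellFounded_lt (α := K)).min {δ : K | X (c.1 δ) ≠ c.2 δ} h) δ with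
    h1 | h1 | h1
  · exact absurd (hmin _ h1) hmem
  · exact h1
  · exact ((wellFounded_lt (α := K)).not_lt_min _ hδ h1).elim

/-- The coding function into `L → K`. -/
def F (ι : (K → L) × (K → Bool) → L) (X : L → Bool) : L → K :=
  Function.extend ι (ld X) fun _ => Classical.arbitrary K

theorem fiber_small [NoMaxOrder K] (ι : (K → L) × (K → Bool) → L) (hι : Function.Injective ι)
    (g : L → K) :
    #{X : L → Bool // ∀ α, F ι X α ≤ g α} ≤ #((K → L) × (K → Bool)) := by
  -- Claim: every member of the fiber is determined within the fiber by its trace on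
  -- some K-indexed sequence of points.
  have claim : ∀ X : L → Bool, (∀ α, F ι X α ≤ g α) → ∃ p : K → L,
      ∀ Z : L → Bool, (∀ α, F ι Z α ≤ g α) → (∀ δ : K, Z (p δ) = X (p δ)) → Z = X := by
    intro X _
    by_contra hcon
    push_neg at hcon
    have W : ∀ p : K → L, ∃ Z : L → Bool,
        (∀ α, F ι Z α ≤ g α) ∧ (∀ δ : K, Z (p δ) = X (p δ)) ∧ Z ≠ X := by
      intro p
      obtain ⟨Z, hZ1, hZ2, hZ3⟩ := hcon p
      exact ⟨Z, hZ1, hZ2, hZ3⟩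
    -- build p by transfinite recursion
    have wf : WellFounded ((· < ·) : K → K → Prop) := wellFounded_lt
    let patch : (δ : K) → ((y : K) → y < δ → L) → (K → L) := fun δ ih l =>
      if h : l < δ then ih l h else Classical.arbitrary L
    let step : (δ : K) → ((y : K) → y < δ → L) → L := fun δ ih =>
      Classical.choose (Function.ne_iff.mp (W (patch δ ih)).choose_spec.2.2)
    let p : K → L := wf.fix (C := fun _ => L) step
    have hp : ∀ δ : K, p δ = step δ fun y _ => p y := fun δ => wf.fix_eq step δ
    set pp : K → K → L := fun δ => patch δ (fun y _ => p y) with hpp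
    have hpplt : ∀ δ l : K, l < δ → pp δ l = p l := by
      intro δ l hl
      simp only [hpp, patch, dif_pos hl]
    set Z : K → (L → Bool) := fun δ => (W (pp δ)).choose with hZdef
    have hZY : ∀ δ : K, ∀ α, F ι (Z δ) α ≤ g α := fun δ => (W (pp δ)).choose_spec.1
    have hZag : ∀ δ l : K, l < δ → Z δ (p l) = X (p l) := by
      intro δ l hl
      have h1 := (W (pp δ)).choose_spec.2.1 l
      rwa [hpplt δ l hl] at h1
    have hZdiff : ∀ δ : K, Z δ (p δ) ≠ X (p δ) := by
      intro δ
      rw [hp δ]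
      exact Classical.choose_spec (Function.ne_iff.mp (W (pp δ)).choose_spec.2.2)
    set q : K → Bool := fun δ => X (p δ) with hq
    have key : ∀ δ : K, δ ≤ g (ι (p, q)) := by
      intro δ
      have h1 : ld (Z δ) (p, q) = δ := by
        apply ld_eq
        · exact hZdiff δ
        · intro l hl; exact hZag δ l hl
      have h2 : F ι (Z δ) (ι (p, q)) = δ := by
        rw [F, hι.extend_apply, h1]
      have h3 := hZY δ (ι (p, q))
      rwa [h2] at h3
    obtain ⟨b, hb⟩ := exists_gt (g (ι (p, q)))
    exact absurd (key b) (not_le.mpr hb)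
  choose pf hpf using claim
  have inj : Function.Injective fun X : {X : L → Bool // ∀ α, F ι X α ≤ g α} =>
      (pf X.1 X.2, fun δ : K => X.1 (pf X.1 X.2 δ)) := by
    intro X X' hXX'
    have h1 : pf X.1 X.2 = pf X'.1 X'.2 := congrArg Prod.fst hXX'
    have h2 := congrArg Prod.snd hXX'
    simp only at h2
    refine Subtype.ext ((hpf X.1 X.2 X'.1 X'.2 ?_).symm)
    intro δ
    have h3 := congrFun h2 δ
    rw [← h1] at h3
    exact h3.symm
  exact Cardinal.mk_le_of_injective inj

end

end EveryCofAux

theorem stmt_0 (k l : Cardinal) (hk : ℵ₀ ≤ k) (hkl : k ≤ l) (h : l ^ k = l) :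
    everyCof l.ord.ToType k.ord.ToType = 2 ^ l := by
  have hl : ℵ₀ ≤ l := hk.trans hkl
  set L := l.ord.ToType with hLdef
  set K := k.ord.ToType with hKdef
  have hmkL : #L = l := Cardinal.mk_ord_toType l
  have hmkK : #K = k := Cardinal.mk_ord_toType k
  haveI : Nonempty L :=
    Cardinal.mk_ne_zero_iff.mp (by rw [hmkL]; exact (aleph0_pos.trans_le hl).ne')
  haveI : Nonempty K :=
    Cardinal.mk_ne_zero_iff.mp (by rw [hmkK]; exact (aleph0_pos.trans_le hk).ne')
  haveI : NoMaxOrder K := Cardinal.noMaxOrder hk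
  have h2a : (2 : Cardinal) ≤ ℵ₀ := by exact_mod_cast (Cardinal.nat_lt_aleph0 2).le
  have h2k : (2 : Cardinal) ^ k ≤ l := by
    calc (2:Cardinal) ^ k ≤ l ^ k := power_le_power_right (h2a.trans hl)
    _ = l := h
  have hC : #((K → L) × (K → Bool)) = l := by
    have e1 : #(K → L) = l := by
      rw [Cardinal.mk_arrow, hmkL, hmkK, Cardinal.lift_id, Cardinal.lift_id, h]
    have e2 : #(K → Bool) = 2 ^ k := by
      rw [Cardinal.mk_arrow, hmkK, Cardinal.mk_bool]
      simp
    rw [Cardinal.mk_prod, Cardinal.lift_id, Cardinal.lift_id, e1, e2]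
    exact Cardinal.mul_eq_left hl h2k (Cardinal.power_ne_zero k (by norm_num))
  have hkl2 : k ^ l = 2 ^ l := by
    apply le_antisymm
    · calc k ^ l ≤ ((2:Cardinal) ^ k) ^ l := power_le_power_right (Cardinal.cantor k).le
      _ = 2 ^ (k * l) := by rw [← Cardinal.power_mul]
      _ = 2 ^ l := by rw [Cardinal.mul_eq_right hl hkl (aleph0_pos.trans_le hk).ne']
    · exact power_le_power_right (h2a.trans hk)
  have hmem : (2 : Cardinal) ^ l ∈
      {c | ∃ D : Set (L → K), #D = c ∧ ∀ f : L → K, ∃ g ∈ D, ∀ x, f x ≤ g x} := by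
    refine ⟨Set.univ, ?_, fun f => ⟨f, Set.mem_univ f, fun x => le_rfl⟩⟩
    rw [Cardinal.mk_univ, Cardinal.mk_arrow, hmkL, hmkK, Cardinal.lift_id, Cardinal.lift_id, hkl2]
  have hlow : ∀ c ∈ {c | ∃ D : Set (L → K), #D = c ∧ ∀ f : L → K, ∃ g ∈ D, ∀ x, f x ≤ g x},
      (2 : Cardinal) ^ l ≤ c := by
    rintro c ⟨D, hD, hdom⟩
    have hle : #((K → L) × (K → Bool)) ≤ #L := by rw [hC, hmkL]
    obtain ⟨ι⟩ := (Cardinal.le_def _ _).mp hle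
    have hdomF : ∀ X : L → Bool, ∃ g : D, ∀ α, EveryCofAux.F (⇑ι) X α ≤ (g : L → K) α := by
      intro X
      obtain ⟨g, hg, hg2⟩ := hdom (EveryCofAux.F (⇑ι) X)
      exact ⟨⟨g, hg⟩, hg2⟩
    choose gf hgf using hdomF
    have hinj : Function.Injective fun X : L → Bool =>
        (⟨gf X, X, hgf X⟩ :
          Σ g : D, {X : L → Bool // ∀ α, EveryCofAux.F (⇑ι) X α ≤ (g : L → K) α}) := by
      have hli : Function.LeftInverse
          (fun s : (Σ g : D, {X : L → Bool // ∀ α, EveryCofAux.F (⇑ι) X α ≤ (g : L → K) α}) =>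
            (s.2.1 : L → Bool))
          (fun X : L → Bool => (⟨gf X, X, hgf X⟩ :
            Σ g : D, {X : L → Bool // ∀ α, EveryCofAux.F (⇑ι) X α ≤ (g : L → K) α})) :=
        fun X => rfl
      exact hli.injective
    have step1 : (2 : Cardinal) ^ l ≤
        #(Σ g : D, {X : L → Bool // ∀ α, EveryCofAux.F (⇑ι) X α ≤ (g : L → K) α}) := by
      have hbl : #(L → Bool) = 2 ^ l := by
        rw [Cardinal.mk_arrow, hmkL, Cardinal.mk_bool]
        simp
      rw [← hbl]
      exact Cardinal.mk_le_of_injective hinj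
    have step2 : #(Σ g : D, {X : L → Bool // ∀ α, EveryCofAux.F (⇑ι) X α ≤ (g : L → K) α})
        ≤ #D * l := by
      rw [Cardinal.mk_sigma]
      calc (Cardinal.sum fun g : D =>
              #{X : L → Bool // ∀ α, EveryCofAux.F (⇑ι) X α ≤ (g : L → K) α})
          ≤ Cardinal.sum fun _ : D => l := by
            apply Cardinal.sum_le_sum
            intro g
            exact (EveryCofAux.fiber_small (⇑ι) ι.injective ((g : L → K))).trans_eq hC
        _ = #D * l := Cardinal.sum_const' _ _
    have step3 : (2 : Cardinal) ^ l ≤ #D * l := step1.trans step2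
    rw [← hD]
    by_cases hDl : #D ≤ l
    · exfalso
      have hml : #D * l ≤ l := by
        calc #D * l ≤ l * l := mul_le_mul_left hDl l
          _ = l := Cardinal.mul_eq_self hl
      exact absurd (step3.trans hml) (not_le.mpr (Cardinal.cantor l))
    · push_neg at hDl
      have hmul : #D * l = #D :=
        Cardinal.mul_eq_left (hl.trans hDl.le) hDl.le (aleph0_pos.trans_le hl).ne'
      rwa [hmul] at step3
  rw [everyCof]
  apply le_antisymm
  · exact csInf_le' hmem
  · exact le_csInf ⟨_, hmem⟩ hlow
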